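/- Let R be a ring and let η : F ⟶ G be a natural transformation between finitely presented additive covariant functors from left R-modules to abelian groups. Then the componentwise cokernel functor C, defined by C(M) = coker(η_M : F(M) → G(M)) with the induced action on morphisms, is again a finitely presented functor: there exist left R-modules X, Y, a homomorphism f : Y → X, and a componentwise exact sequence Hom(X,-) → Hom(Y,-) → C → 0 with first map given by composition with f. -/

import Mathlib

open CategoryTheory Opposite

universe u

variable {R : Type u} [Ring R]

/-- An additive functor is finitely presented if it has a componentwise exact
presentation `Hom(X,-) → Hom(Y,-) → F → 0`, where the first map is composition with
some homomorphism `f : Y → X`. -/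
def IsFinitelyPresented (R : Type u) [Ring R]
    (F : ModuleCat.{u} R ⥤ AddCommGrpCat.{u}) : Prop :=
  ∃ (X Y : ModuleCat.{u} R) (f : Y ⟶ X) (π : preadditiveCoyoneda.obj (op Y) ⟶ F),
    (∀ M : ModuleCat.{u} R, Function.Surjective (π.app M)) ∧
    (∀ (M : ModuleCat.{u} R) (g : Y ⟶ M), π.app M g = 0 ↔ ∃ h : X ⟶ M, f ≫ h = g)

/-- The componentwise cokernel of a natural transformation, with the induced action on
morphisms. -/
def cokerFunctor {F G : ModuleCat.{u} R ⥤ AddCommGrpCat.{u}} (η : F ⟶ G) :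
    ModuleCat.{u} R ⥤ AddCommGrpCat.{u} where
  obj M := AddCommGrpCat.of (G.obj M ⧸ (η.app M).hom.range)
  map {M N} u := AddCommGrpCat.ofHom (QuotientAddGroup.map _ _ (G.map u).hom (by
    rintro x ⟨y, rfl⟩
    refine ⟨F.map u y, ?_⟩
    have h := ConcreteCategory.congr_hom (η.naturality u) y
    simpa using h))
  map_id M := by
    ext x
    simp
  map_comp {M N K} u v := by
    ext x
    simp

/-- the componentwise cokernel of a natural transformation between
finitely presented additive functors is finitely presented. -/
theorem statement14 (R : Type u) [Ring R]
    (F G : ModuleCat.{u} R ⥤ AddCommGrpCat.{u}) [F.Additive] [G.Additive]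
    (hF : IsFinitelyPresented R F) (hG : IsFinitelyPresented R G) (η : F ⟶ G) :
    IsFinitelyPresented R (cokerFunctor η) := by
  obtain ⟨XF, YF, fF, πF, hFs, hFk⟩ := hF
  obtain ⟨XG, YG, fG, πG, hGs, hGk⟩ := hG
  -- choose a lift `u : YG ⟶ YF` of the canonical element
  have hGs' : ∀ (M : ModuleCat.{u} R) (y : G.obj M), ∃ g : YG ⟶ M, πG.app M g = y := by
    intro M y; obtain ⟨g, hg⟩ := hGs M y; exact ⟨g, hg⟩
  have hFs' : ∀ (M : ModuleCat.{u} R) (y : F.obj M), ∃ g : YF ⟶ M, πF.app M g = y := by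
    intro M y; obtain ⟨g, hg⟩ := hFs M y; exact ⟨g, hg⟩
  obtain ⟨u, hu⟩ := hGs' YF (η.app YF (πF.app YF (𝟙 YF)))
  -- key compatibility: πG (u ≫ g) = η (πF g)
  have hkey : ∀ (M : ModuleCat.{u} R) (g : YF ⟶ M),
      πG.app M (u ≫ g) = η.app M (πF.app M g) := by
    intro M g
    have h1 : πG.app M (u ≫ g) = G.map g (πG.app YF u) :=
      ConcreteCategory.congr_hom (πG.naturality g) u
    have h2 : F.map g (πF.app YF (𝟙 YF)) = πF.app M (𝟙 YF ≫ g) :=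
      (ConcreteCategory.congr_hom (πF.naturality g) (𝟙 YF)).symm
    have h3 : (η.app M) ((F.map g) (πF.app YF (𝟙 YF))) =
        (G.map g) ((η.app YF) (πF.app YF (𝟙 YF))) :=
      ConcreteCategory.congr_hom (η.naturality g) (πF.app YF (𝟙 YF))
    rw [h1, hu, ← h3, h2, Category.id_comp]
  -- the presentation data for the cokernel functor
  refine ⟨ModuleCat.of R (XG × YF), YG, ModuleCat.ofHom (LinearMap.prod fG.hom u.hom),
    { app := fun M => AddCommGrpCat.ofHom
        ((QuotientAddGroup.mk' (η.app M).hom.range).comp (πG.app M).hom)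
      naturality := ?_ }, ?_, ?_⟩
  · intro M N g
    ext x
    exact congrArg (QuotientAddGroup.mk' _) (ConcreteCategory.congr_hom (πG.naturality g) x)
  · intro M x
    induction x using QuotientAddGroup.induction_on with
    | H y =>
      obtain ⟨g, hg⟩ := hGs M y
      exact ⟨g, congrArg (QuotientAddGroup.mk' _) hg⟩
  · intro M g
    constructor
    · intro h
      have h' : πG.app M g ∈ (η.app M).hom.range :=
        (QuotientAddGroup.eq_zero_iff _).mp h
      obtain ⟨x, hx⟩ := h'
      obtain ⟨w, hw⟩ := hFs' M x
      have h2 : πG.app M (g - u ≫ w) = 0 := by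
        have := hkey M w
        rw [hw, hx] at this
        exact (map_sub (πG.app M).hom g (u ≫ w)).trans (sub_eq_zero.mpr this.symm)
      obtain ⟨k, hk⟩ := (hGk M _).mp h2
      refine ⟨ModuleCat.ofHom (k.hom.comp (LinearMap.fst R XG YF)) +
        ModuleCat.ofHom (w.hom.comp (LinearMap.snd R XG YF)), ?_⟩
      have hk' : ∀ y : YG, k (fG y) = g y - (u ≫ w) y := fun y =>
        ConcreteCategory.congr_hom hk y
      ext y
      show k (fG y) + w (u y) = g y
      rw [hk' y]
      show g y - w (u y) + w (u y) = g y
      abel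
    · rintro ⟨h, rfl⟩
      apply (QuotientAddGroup.eq_zero_iff _).mpr
      -- decompose: (prod fG u) ≫ h = fG ≫ (h ∘ inl) + u ≫ (h ∘ inr)
      have hdec : (ModuleCat.ofHom (LinearMap.prod fG.hom u.hom) ≫ h : YG ⟶ M) =
          (fG ≫ ModuleCat.ofHom (h.hom.comp (LinearMap.inl R XG YF))) +
          (u ≫ ModuleCat.ofHom (h.hom.comp (LinearMap.inr R XG YF))) := by
        ext y
        show h (fG y, u y) = h (fG y, 0) + h (0, u y)
        rw [← map_add, Prod.mk_add_mk, add_zero, zero_add]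
      have hπadd : πG.app M (ModuleCat.ofHom (LinearMap.prod fG.hom u.hom) ≫ h) =
          πG.app M (fG ≫ ModuleCat.ofHom (h.hom.comp (LinearMap.inl R XG YF))) +
          πG.app M (u ≫ ModuleCat.ofHom (h.hom.comp (LinearMap.inr R XG YF))) := by
        rw [hdec]; exact map_add _ _ _
      have h0 : πG.app M (fG ≫ ModuleCat.ofHom (h.hom.comp (LinearMap.inl R XG YF))) = 0 :=
        (hGk M _).mpr ⟨_, rfl⟩
      have hfin : πG.app M (ModuleCat.ofHom (LinearMap.prod fG.hom u.hom) ≫ h) =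
          η.app M (πF.app M (ModuleCat.ofHom (h.hom.comp (LinearMap.inr R XG YF)))) := by
        rw [hπadd, h0, zero_add, hkey]
      exact ⟨_, hfin.symm⟩
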